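/- For a permutation f of a finite set with n elements and any integer k with k ≥ 4n ≥ 77, we have |H_{f,k} − H_{f,∞}| ≤ 3n·log₂(n)/k. -/

import Mathlib

open scoped Classical

/-- `itN f k x y` counts the iterates `j < k` with `f^[j] x = y`. -/
noncomputable def itN {X : Type*} (f : X → X) (k : ℕ) (x y : X) : ℕ :=
  ((Finset.range k).filter (fun j => f^[j] x = y)).card

/-- The (shifted) iteration entropy `H_{f,k}`. -/
noncomputable def itH (X : Type*) [Fintype X] (f : X → X) (k : ℕ) : ℝ :=
  (1 / ((k : ℝ) * (Fintype.card X : ℝ))) *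
    ∑ x : X, ∑ y : X, (itN f k x y : ℝ) * Real.logb 2 ((k : ℝ) / (itN f k x y : ℝ))

/-- number of `j < k` with `j % c = i` is at least `k / c`. -/
lemma count_mod_ge (c i k : ℕ) (hc : 0 < c) (hi : i < c) :
    k / c ≤ ((Finset.range k).filter (fun j => j % c = i)).card := by
  classical
  have := Finset.card_le_card_of_injOn (f := fun m => m * c + i)
    (s := Finset.range (k / c))
    (t := (Finset.range k).filter (fun j => j % c = i))
    (by
      intro m hm
      rw [Finset.mem_coe, Finset.mem_range] at hm
      show m * c + i ∈ (Finset.range k).filter (fun j => j % c = i)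
      rw [Finset.mem_filter, Finset.mem_range]
      constructor
      · have h1 : (m + 1) * c ≤ (k / c) * c := Nat.mul_le_mul_right c hm
        have h2 : (k / c) * c ≤ k := Nat.div_mul_le_self k c
        have h3 : m * c + i < (m + 1) * c := by
          have h4 : (m + 1) * c = m * c + c := by ring
          omega
        omega
      · have h5 : (m * c + i) % c = i % c := by
          rw [Nat.mul_comm m c]
          exact Nat.mul_add_mod c m i
        rw [h5, Nat.mod_eq_of_lt hi])
    (by
      intro a _ b _ hab
      have hab' : a * c + i = b * c + i := hab
      have h6 : a * c = b * c := by omega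
      exact Nat.eq_of_mul_eq_mul_right hc h6)
  simpa using this

/-- number of `j < k` with `j % c = i` is at most `k / c + 1`. -/
lemma count_mod_le (c i k : ℕ) (hc : 0 < c) :
    ((Finset.range k).filter (fun j => j % c = i)).card ≤ k / c + 1 := by
  classical
  have := Finset.card_le_card_of_injOn (f := fun j => j / c)
    (s := (Finset.range k).filter (fun j => j % c = i))
    (t := Finset.range (k / c + 1))
    (by
      intro j hj
      rw [Finset.mem_coe, Finset.mem_filter, Finset.mem_range] at hj
      show j / c ∈ Finset.range (k / c + 1)
      rw [Finset.mem_range]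
      have h1 : j / c ≤ k / c := Nat.div_le_div_right (Nat.le_of_lt hj.1)
      omega)
    (by
      intro a ha b hb hab
      rw [Finset.mem_coe, Finset.mem_filter] at ha hb
      have hab' : a / c = b / c := hab
      have ha2 := Nat.div_add_mod a c
      have hb2 := Nat.div_add_mod b c
      rw [ha.2] at ha2
      rw [hb.2] at hb2
      rw [hab'] at ha2
      omega)
  simpa using this

open Finset Real in
lemma count_mod_sum (c k : ℕ) (hc : 0 < c) :
    ∑ i ∈ Finset.range c, ((Finset.range k).filter (fun j => j % c = i)).card = k := by
  classical
  have := Finset.card_eq_sum_card_fiberwise (f := fun j => j % c)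
    (s := Finset.range k) (t := Finset.range c)
    (by intro j _; exact Finset.mem_range.2 (Nat.mod_lt _ hc))
  simpa using this.symm

lemma arith_aux (K Q N L : ℝ) (hQ : 4 ≤ Q) (hN : 2 ≤ N) (hL : 1 ≤ L)
    (hK : K ≤ (Q + 1) * N) : 2 * K ≤ 3 * N * L * Q := by
  nlinarith [mul_nonneg (by linarith : (0 : ℝ) ≤ N) (by linarith : (0 : ℝ) ≤ Q - 2),
    mul_nonneg (mul_nonneg (by linarith : (0 : ℝ) ≤ 3 * N)
      (by linarith : (0 : ℝ) ≤ Q)) (by linarith : (0 : ℝ) ≤ L - 1)]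

set_option maxHeartbeats 1000000 in
open Finset Real in
/-- The key per-point estimate. -/
lemma itN_per_point {X : Type*} [Fintype X] (f : Equiv.Perm X) (k : ℕ) (x : X)
    (hk4n : 4 * Fintype.card X ≤ k) (hn2 : 2 ≤ Fintype.card X) :
    |(1 / (k : ℝ)) * ∑ y : X, (itN (⇑f) k x y : ℝ) *
        Real.logb 2 ((k : ℝ) / (itN (⇑f) k x y : ℝ)) -
      Real.logb 2 (Function.minimalPeriod (⇑f) x : ℝ)| ≤
    3 * (Fintype.card X : ℝ) * Real.logb 2 (Fintype.card X) / k := by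
  classical
  set n := Fintype.card X with hn_def
  set c := Function.minimalPeriod (⇑f) x with hc_def
  -- basic positivity facts
  have hper : x ∈ Function.periodicPts (⇑f) := by
    refine ⟨orderOf f, orderOf_pos f, ?_⟩
    show (⇑f)^[orderOf f] x = x
    rw [← Equiv.Perm.coe_pow, pow_orderOf_eq_one]
    rfl
  have hc0 : 0 < c := Function.minimalPeriod_pos_of_mem_periodicPts hper
  have hinj : Set.InjOn (fun i => (⇑f)^[i] x) ↑(Finset.range c) := by
    intro a ha b hb hab
    exact Function.iterate_injOn_Iio_minimalPeriod
      (by simpa using ha) (by simpa using hb) hab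
  have hcn : c ≤ n := by
    have h := Finset.card_le_univ ((Finset.range c).image (fun i => (⇑f)^[i] x))
    rw [Finset.card_image_of_injOn hinj, Finset.card_range] at h
    exact h
  have hkpos : 0 < k := by omega
  set q := k / c with hq_def
  have hq4 : 4 ≤ q := by
    rw [hq_def, Nat.le_div_iff_mul_le hc0]
    have : 4 * c ≤ 4 * n := by omega
    omega
  have hqck : q * c ≤ k := Nat.div_mul_le_self k c
  have hkqc : k < (q + 1) * c := by
    have h1 : c * (k / c) + k % c = k := Nat.div_add_mod k c
    rw [← hq_def] at h1
    have h2 := Nat.mod_lt k hc0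
    have h3 : (q + 1) * c = q * c + c := by ring
    have h4 : c * q = q * c := Nat.mul_comm c q
    omega
  -- rewrite the inner sum as a sum over the orbit
  set Ni : ℕ → ℕ := fun i => ((Finset.range k).filter (fun j => j % c = i)).card with hNi_def
  have hNorbit : ∀ i < c, itN (⇑f) k x ((⇑f)^[i] x) = Ni i := by
    intro i hi
    unfold itN
    congr 1
    apply Finset.filter_congr
    intro j _
    constructor
    · intro h
      have h2 : (⇑f)^[j % c] x = (⇑f)^[i] x := by
        rw [Function.iterate_mod_minimalPeriod_eq]
        exact h
      exact (Function.iterate_eq_iterate_iff_of_lt_minimalPeriod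
        (Nat.mod_lt _ hc0) hi).1 h2
    · intro h
      calc (⇑f)^[j] x = (⇑f)^[j % c] x :=
            (Function.iterate_mod_minimalPeriod_eq).symm
        _ = (⇑f)^[i] x := by rw [h]
  set T := (Finset.range c).image (fun i => (⇑f)^[i] x) with hT_def
  have hvanish : ∀ y ∈ (Finset.univ : Finset X), y ∉ T →
      (itN (⇑f) k x y : ℝ) * Real.logb 2 ((k : ℝ) / (itN (⇑f) k x y : ℝ)) = 0 := by
    intro y _ hy
    have hzero : itN (⇑f) k x y = 0 := by
      by_contra h
      have hpos : 0 < ((Finset.range k).filter (fun j => (⇑f)^[j] x = y)).card := by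
        unfold itN at h; omega
      obtain ⟨j, hj⟩ := Finset.card_pos.1 hpos
      rw [Finset.mem_filter] at hj
      apply hy
      rw [hT_def, Finset.mem_image]
      refine ⟨j % c, Finset.mem_range.2 (Nat.mod_lt _ hc0), ?_⟩
      rw [Function.iterate_mod_minimalPeriod_eq]
      exact hj.2
    rw [hzero]
    simp
  have hsum1 : ∑ y : X, (itN (⇑f) k x y : ℝ) *
      Real.logb 2 ((k : ℝ) / (itN (⇑f) k x y : ℝ)) =
      ∑ i ∈ Finset.range c, (Ni i : ℝ) * Real.logb 2 ((k : ℝ) / (Ni i : ℝ)) := by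
    rw [← Finset.sum_subset (Finset.subset_univ T) hvanish]
    rw [hT_def, Finset.sum_image (fun a ha b hb hab => hinj ha hb hab)]
    exact Finset.sum_congr rfl fun i hi => by
      rw [hNorbit i (Finset.mem_range.1 hi)]
  -- counting bounds
  have hNle : ∀ i ∈ Finset.range c, Ni i ≤ q + 1 := fun i _ =>
    count_mod_le c i k hc0
  have hNge : ∀ i ∈ Finset.range c, q ≤ Ni i := fun i hi =>
    count_mod_ge c i k hc0 (Finset.mem_range.1 hi)
  have hNsum : ∑ i ∈ Finset.range c, Ni i = k := count_mod_sum c k hc0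
  -- real versions
  have hK0 : (0 : ℝ) < (k : ℝ) := by exact_mod_cast hkpos
  have hQ4 : (4 : ℝ) ≤ (q : ℝ) := by exact_mod_cast hq4
  have hQ0 : (0 : ℝ) < (q : ℝ) := by linarith
  have hC0 : (0 : ℝ) < (c : ℝ) := by exact_mod_cast hc0
  have hCN : (c : ℝ) ≤ (n : ℝ) := by exact_mod_cast hcn
  have hN2 : (2 : ℝ) ≤ (n : ℝ) := by exact_mod_cast hn2
  have hK4N : 4 * (n : ℝ) ≤ (k : ℝ) := by exact_mod_cast hk4n
  have hQCK : (q : ℝ) * (c : ℝ) ≤ (k : ℝ) := by exact_mod_cast hqck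
  have hKQC : (k : ℝ) < ((q : ℝ) + 1) * (c : ℝ) := by exact_mod_cast hkqc
  -- bounds on the per-term logs
  set lbLow : ℝ := Real.logb 2 ((k : ℝ) / ((q : ℝ) + 1)) with hlbLow
  set lbHigh : ℝ := Real.logb 2 ((k : ℝ) / (q : ℝ)) with hlbHigh
  have hterm : ∀ i ∈ Finset.range c,
      (Ni i : ℝ) * lbLow ≤ (Ni i : ℝ) * Real.logb 2 ((k : ℝ) / (Ni i : ℝ)) ∧
      (Ni i : ℝ) * Real.logb 2 ((k : ℝ) / (Ni i : ℝ)) ≤ (Ni i : ℝ) * lbHigh := by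
    intro i hi
    have h1 : (q : ℝ) ≤ (Ni i : ℝ) := by exact_mod_cast hNge i hi
    have h2 : (Ni i : ℝ) ≤ (q : ℝ) + 1 := by
      have := hNle i hi
      push_cast
      exact_mod_cast this
    have hNipos : (0 : ℝ) < (Ni i : ℝ) := by linarith
    have hd1 : (k : ℝ) / ((q : ℝ) + 1) ≤ (k : ℝ) / (Ni i : ℝ) :=
      div_le_div_of_nonneg_left (le_of_lt hK0) hNipos h2
    have hd2 : (k : ℝ) / (Ni i : ℝ) ≤ (k : ℝ) / (q : ℝ) :=
      div_le_div_of_nonneg_left (le_of_lt hK0) hQ0 h1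
    have hp1 : (0 : ℝ) < (k : ℝ) / ((q : ℝ) + 1) := by positivity
    have hp2 : (0 : ℝ) < (k : ℝ) / (Ni i : ℝ) := by positivity
    constructor
    · exact mul_le_mul_of_nonneg_left
        (Real.logb_le_logb_of_le (by norm_num) hp1 hd1) (le_of_lt hNipos)
    · exact mul_le_mul_of_nonneg_left
        (Real.logb_le_logb_of_le (by norm_num) hp2 hd2) (le_of_lt hNipos)
  set S : ℝ := ∑ i ∈ Finset.range c, (Ni i : ℝ) * Real.logb 2 ((k : ℝ) / (Ni i : ℝ))
    with hS_def
  have hNsumR : ∑ i ∈ Finset.range c, (Ni i : ℝ) = (k : ℝ) := by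
    exact_mod_cast congrArg (Nat.cast : ℕ → ℝ) hNsum
  have hSlow : (k : ℝ) * lbLow ≤ S := by
    calc (k : ℝ) * lbLow = (∑ i ∈ Finset.range c, (Ni i : ℝ)) * lbLow := by
          rw [hNsumR]
      _ = ∑ i ∈ Finset.range c, (Ni i : ℝ) * lbLow := by rw [Finset.sum_mul]
      _ ≤ S := Finset.sum_le_sum fun i hi => (hterm i hi).1
  have hShigh : S ≤ (k : ℝ) * lbHigh := by
    calc S ≤ ∑ i ∈ Finset.range c, (Ni i : ℝ) * lbHigh :=
          Finset.sum_le_sum fun i hi => (hterm i hi).2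
      _ = (∑ i ∈ Finset.range c, (Ni i : ℝ)) * lbHigh := by rw [Finset.sum_mul]
      _ = (k : ℝ) * lbHigh := by rw [hNsumR]
  -- logb 2 c is in the same interval
  have hcLow : lbLow ≤ Real.logb 2 (c : ℝ) := by
    apply Real.logb_le_logb_of_le (by norm_num) (by positivity)
    rw [div_le_iff₀ (by linarith : (0 : ℝ) < (q : ℝ) + 1)]
    have hmc : (c : ℝ) * ((q : ℝ) + 1) = ((q : ℝ) + 1) * (c : ℝ) := mul_comm _ _
    linarith
  have hcHigh : Real.logb 2 (c : ℝ) ≤ lbHigh := by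
    apply Real.logb_le_logb_of_le (by norm_num) hC0
    rw [le_div_iff₀ hQ0]
    have hmc : (c : ℝ) * (q : ℝ) = (q : ℝ) * (c : ℝ) := mul_comm _ _
    linarith
  -- the difference is at most the interval width
  have hwidth : |(1 / (k : ℝ)) * S - Real.logb 2 (c : ℝ)| ≤ lbHigh - lbLow := by
    have h1 : lbLow ≤ (1 / (k : ℝ)) * S := by
      have h := mul_le_mul_of_nonneg_left hSlow
        (by positivity : (0 : ℝ) ≤ 1 / (k : ℝ))
      have e : (1 / (k : ℝ)) * ((k : ℝ) * lbLow) = lbLow := by field_simp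
      rw [e] at h
      exact h
    have h2 : (1 / (k : ℝ)) * S ≤ lbHigh := by
      have h := mul_le_mul_of_nonneg_left hShigh
        (by positivity : (0 : ℝ) ≤ 1 / (k : ℝ))
      have e : (1 / (k : ℝ)) * ((k : ℝ) * lbHigh) = lbHigh := by field_simp
      rw [e] at h
      exact h
    rw [abs_sub_le_iff]
    constructor <;> linarith
  -- the interval width is logb 2 ((q+1)/q)
  have hwidth_eq : lbHigh - lbLow = Real.logb 2 (((q : ℝ) + 1) / (q : ℝ)) := by
    rw [hlbHigh, hlbLow, ← Real.logb_div (by positivity) (by positivity)]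
    congr 1
    field_simp
  -- bound the width
  have hlog2 : (1 / 2 : ℝ) ≤ Real.log 2 := by
    have := Real.log_two_gt_d9
    linarith
  have hwidth_le : Real.logb 2 (((q : ℝ) + 1) / (q : ℝ)) ≤ 2 / (q : ℝ) := by
    have hx0 : (0 : ℝ) < ((q : ℝ) + 1) / (q : ℝ) := by positivity
    have hlog_le : Real.log (((q : ℝ) + 1) / (q : ℝ)) ≤ 1 / (q : ℝ) := by
      have := Real.log_le_sub_one_of_pos hx0
      have heq : ((q : ℝ) + 1) / (q : ℝ) - 1 = 1 / (q : ℝ) := by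
        field_simp
        ring
      linarith [heq ▸ this]
    rw [Real.logb, div_le_iff₀ (by positivity : (0 : ℝ) < Real.log 2)]
    have h7 := mul_le_mul_of_nonneg_left hlog2
      (by positivity : (0 : ℝ) ≤ 2 / (q : ℝ))
    have e7 : 2 / (q : ℝ) * (1 / 2) = 1 / (q : ℝ) := by ring
    rw [e7] at h7
    linarith [hlog_le, h7]
  -- final numeric bound
  have hlogn1 : (1 : ℝ) ≤ Real.logb 2 (n : ℝ) := by
    have : Real.logb 2 (2 : ℝ) ≤ Real.logb 2 (n : ℝ) :=
      Real.logb_le_logb_of_le (by norm_num) (by norm_num) hN2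
    simpa using this
  have hfinal : 2 / (q : ℝ) ≤ 3 * (n : ℝ) * Real.logb 2 (n : ℝ) / (k : ℝ) := by
    rw [div_le_div_iff₀ hQ0 hK0]
    have hKQN : (k : ℝ) ≤ ((q : ℝ) + 1) * (n : ℝ) := by
      have h := mul_le_mul_of_nonneg_left hCN
        (by linarith : (0 : ℝ) ≤ (q : ℝ) + 1)
      linarith
    exact arith_aux _ _ _ _ hQ4 hN2 hlogn1 hKQN
  calc |(1 / (k : ℝ)) * ∑ y : X, (itN (⇑f) k x y : ℝ) *
        Real.logb 2 ((k : ℝ) / (itN (⇑f) k x y : ℝ)) -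
        Real.logb 2 (c : ℝ)|
      = |(1 / (k : ℝ)) * S - Real.logb 2 (c : ℝ)| := by rw [hsum1]
    _ ≤ lbHigh - lbLow := hwidth
    _ = Real.logb 2 (((q : ℝ) + 1) / (q : ℝ)) := hwidth_eq
    _ ≤ 2 / (q : ℝ) := hwidth_le
    _ ≤ 3 * (n : ℝ) * Real.logb 2 (n : ℝ) / (k : ℝ) := hfinal

theorem itH_close_to_itHinf_perm {X : Type*} [Fintype X] (f : Equiv.Perm X) (k : ℕ)
    (hk4n : 4 * Fintype.card X ≤ k) (hn77 : 77 ≤ 4 * Fintype.card X) :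
    |itH X (⇑f) k -
        (1 / (Fintype.card X : ℝ)) *
          ∑ x : X, Real.logb 2 (Function.minimalPeriod (⇑f) x)| ≤
      3 * (Fintype.card X : ℝ) * Real.logb 2 (Fintype.card X) / k := by
  classical
  set n := Fintype.card X with hn_def
  have hn2 : 2 ≤ n := by omega
  have hn0 : (0 : ℝ) < (n : ℝ) := by
    have : 0 < n := by omega
    exact_mod_cast this
  have hk0 : (0 : ℝ) < (k : ℝ) := by
    have : 0 < k := by omega
    exact_mod_cast this
  set d : X → ℝ := fun x =>
    (1 / (k : ℝ)) * ∑ y : X, (itN (⇑f) k x y : ℝ) *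
      Real.logb 2 ((k : ℝ) / (itN (⇑f) k x y : ℝ)) -
    Real.logb 2 (Function.minimalPeriod (⇑f) x : ℝ) with hd_def
  have hitH : itH X (⇑f) k -
      (1 / (n : ℝ)) * ∑ x : X, Real.logb 2 (Function.minimalPeriod (⇑f) x : ℝ) =
      (1 / (n : ℝ)) * ∑ x : X, d x := by
    rw [itH, hd_def, Finset.mul_sum, Finset.mul_sum, Finset.mul_sum,
      ← Finset.sum_sub_distrib]
    apply Finset.sum_congr rfl
    intro x _
    ring
  rw [hitH]
  have hbound : ∀ x : X, |d x| ≤ 3 * (n : ℝ) * Real.logb 2 (n : ℝ) / (k : ℝ) :=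
    fun x => itN_per_point f k x hk4n hn2
  calc |(1 / (n : ℝ)) * ∑ x : X, d x|
      = (1 / (n : ℝ)) * |∑ x : X, d x| := by
        rw [abs_mul, abs_of_nonneg (by positivity : (0 : ℝ) ≤ 1 / (n : ℝ))]
    _ ≤ (1 / (n : ℝ)) * ∑ x : X, |d x| := by
        apply mul_le_mul_of_nonneg_left (Finset.abs_sum_le_sum_abs _ _)
        positivity
    _ ≤ (1 / (n : ℝ)) * ∑ _x : X, (3 * (n : ℝ) * Real.logb 2 (n : ℝ) / (k : ℝ)) := by
        apply mul_le_mul_of_nonneg_left (Finset.sum_le_sum fun x _ => hbound x)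
        positivity
    _ = 3 * (n : ℝ) * Real.logb 2 (n : ℝ) / (k : ℝ) := by
        rw [Finset.sum_const, Finset.card_univ, ← hn_def, nsmul_eq_mul]
        field_simp
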